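/- arXiv:0704.2838 — 2 statements merged into one kernel-verified Lean document; each statement's English description precedes it below -/
import Mathlib

section
/- For every k ≥ 1 and every a ∈ ℂ∖{0}, the map T ↦ m^{(1)}_{T,a} from Tab(1,k) to G is injective. -/
noncomputable section

/-- The set `B = {1,2,3,4,4̄,3̄,2̄,1̄}`. -/
inductive BB : Type
  | b1 | b2 | b3 | b4 | b4' | b3' | b2' | b1'
  deriving DecidableEq

instance : Fintype BB :=
  ⟨{.b1, .b2, .b3, .b4, .b4', .b3', .b2', .b1'}, by intro x; cases x <;> simp⟩

/-- The rank used to define the partial order on `B`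
(`4` and `4̄` get the same rank, making them incomparable). -/
def BB.rank : BB → ℕ
  | .b1 => 0 | .b2 => 1 | .b3 => 2 | .b4 => 3 | .b4' => 3
  | .b3' => 4 | .b2' => 5 | .b1' => 6

/-- The partial order `⪯` on `B` : `1 ≺ 2 ≺ 3 ≺ 4 ≺ 3̄ ≺ 2̄ ≺ 1̄` and `3 ≺ 4̄ ≺ 3̄`,
with `4` and `4̄` incomparable. -/
def BB.le (x y : BB) : Prop := x = y ∨ x.rank < y.rank

/-- The strict order `≺` on `B`. -/
def BB.lt (x y : BB) : Prop := x.rank < y.rank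

/-- Monomials: the free abelian group on `{1,2} × ℂˣ`, written additively;
`Finsupp.single (i,b) 1` corresponds to the generator `Z_{i+1,b}`. -/
abbrev Mon2 : Type := (Fin 2 × ℂˣ) →₀ ℤ

/-- The group ring `ℤ[G]`. -/
abbrev LR2 : Type := AddMonoidAlgebra ℤ Mon2

/-- The generator `Z_{i,b}` (with `i : Fin 2` indexing `{1,2}`). -/
def Zv (i : Fin 2) (b : ℂˣ) : Mon2 := Finsupp.single (i, b) 1

/-- `j = e^{2iπ/3}`, a primitive cube root of unity, as a unit of `ℂ`. -/
def jC : ℂˣ := Units.mk0 (Complex.exp (2 * Real.pi * Complex.I / 3)) (Complex.exp_ne_zero _)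

/-- The boxes `⟦α⟧_a ∈ G` for `α ∈ B` (written additively). -/
def box (q : ℂˣ) : BB → ℂˣ → Mon2
  | .b1, a => Zv 0 a
  | .b2, a => -Zv 0 (a * q ^ 2) + Zv 1 (a ^ 3 * q ^ 3)
  | .b3, a => -Zv 1 (a ^ 3 * q ^ 9) + Zv 0 (a * q ^ 2 * jC) + Zv 0 (a * q ^ 2 * jC ^ 2)
  | .b4, a => Zv 0 (a * q ^ 2 * jC) - Zv 0 (a * q ^ 4 * jC ^ 2)
  | .b4', a => Zv 0 (a * q ^ 2 * jC ^ 2) - Zv 0 (a * q ^ 4 * jC)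
  | .b3', a => -Zv 0 (a * q ^ 4 * jC) - Zv 0 (a * q ^ 4 * jC ^ 2) + Zv 1 (a ^ 3 * q ^ 9)
  | .b2', a => Zv 0 (a * q ^ 4) - Zv 1 (a ^ 3 * q ^ 15)
  | .b1', a => -Zv 0 (a * q ^ 6)

/-- `Tab(1,k)`: sequences `(T_1,…,T_k)` in `B` with `T_p ⪯ T_{p+1}`. -/
def IsTab1 (k : ℕ) (T : Fin k → BB) : Prop :=
  ∀ (p : ℕ) (h : p + 1 < k), BB.le (T ⟨p, Nat.lt_of_succ_lt h⟩) (T ⟨p + 1, h⟩)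

/-- The monomial `m^{(1)}_{T,a} = ∏_{p=1}^{k} ⟦T_p⟧_{aq^{2(p-1)}}` (written additively). -/
def m1 (q : ℂˣ) {k : ℕ} (T : Fin k → BB) (a : ℂˣ) : Mon2 :=
  ∑ p : Fin k, box q (T p) (a * q ^ (2 * (p : ℕ)))

/-- `Tab(2,k)`: two-row arrays with entries in `B` satisfying (θ1)–(θ4).
Row `i : Fin 2` corresponds to row `i+1` of the paper. -/
def IsTab2 (k : ℕ) (T : Fin 2 → Fin k → BB) : Prop :=
  (∀ i : Fin 2, IsTab1 k (T i)) ∧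
  (∀ p : Fin k, ¬ BB.le (T 1 p) (T 0 p)) ∧
  (¬ ∃ p p' : Fin k, p < p' ∧
      (∀ r : Fin k, p ≤ r → r < p' → T 0 r = BB.b3) ∧ T 0 p' = BB.b4 ∧
      T 1 p = BB.b4 ∧ (∀ r : Fin k, p < r → r ≤ p' → T 1 r = BB.b3')) ∧
  (¬ ∃ p p' : Fin k, p < p' ∧
      (∀ r : Fin k, p ≤ r → r < p' → T 0 r = BB.b3) ∧ T 0 p' = BB.b4' ∧
      T 1 p = BB.b4' ∧ (∀ r : Fin k, p < r → r ≤ p' → T 1 r = BB.b3'))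

/-- The monomial `m^{(2)}_{T,a} = ∏_{i∈{1,2}} ∏_{p=1}^{k} ⟦T_{i,p}⟧_{aq^{2(p-i)}}`
(written additively; rows and columns are 0-indexed). -/
def m2 (q : ℂˣ) {k : ℕ} (T : Fin 2 → Fin k → BB) (a : ℂˣ) : Mon2 :=
  ∑ i : Fin 2, ∑ p : Fin k, box q (T i p) (a * q ^ (2 * ((p : ℤ) - (i : ℤ))))


/-! ### Auxiliary development for the proof of `m1_injective` -/

set_option maxHeartbeats 1600000

namespace M1InjAux

/-- The quotient of `ℂˣ` by its torsion subgroup. -/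
abbrev Qt : Type := ℂˣ ⧸ CommGroup.torsion ℂˣ

/-- The quotient of `ℂˣ` by the subgroup generated by `q`. -/
abbrev Rt (q : ℂˣ) : Type := ℂˣ ⧸ Subgroup.zpowers q

lemma hqU (q : ℂˣ) (hq : ∀ n : ℕ, 0 < n → (q : ℂ) ^ n ≠ 1) :
    ∀ n : ℕ, 0 < n → q ^ n ≠ 1 := by
  intro n hn h
  refine hq n hn ?_
  rw [← Units.val_pow_eq_pow_val, h, Units.val_one]

lemma hqZ (q : ℂˣ) (hq : ∀ n : ℕ, 0 < n → (q : ℂ) ^ n ≠ 1) :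
    ∀ z : ℤ, q ^ z = 1 → z = 0 := by
  intro z h
  by_contra hz
  have hn : 0 < z.natAbs := Int.natAbs_pos.mpr hz
  refine hqU q hq z.natAbs hn ?_
  rcases Int.natAbs_eq z with h' | h'
  · rw [← zpow_natCast, ← h', h]
  · have : q ^ (-(z.natAbs : ℤ)) = 1 := by rw [← h', h]
    rw [zpow_neg, inv_eq_one, zpow_natCast] at this
    exact this

lemma jC_cube : jC ^ 3 = 1 := by
  ext
  show (Complex.exp (2 * Real.pi * Complex.I / 3)) ^ 3 = 1
  rw [← Complex.exp_nat_mul]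
  rw [show ((3:ℕ):ℂ) * (2 * Real.pi * Complex.I / 3) = 2 * Real.pi * Complex.I by
    push_cast; ring]
  exact Complex.exp_two_pi_mul_I

lemma jC_ne_one : jC ≠ 1 := by
  intro h
  have h' : Complex.exp (2 * Real.pi * Complex.I / 3) = 1 := congrArg Units.val h
  rw [Complex.exp_eq_one_iff] at h'
  obtain ⟨n, hn⟩ := h'
  have h2 : (2 * (Real.pi : ℂ) * Complex.I) ≠ 0 := by
    simp [Real.pi_ne_zero, Complex.I_ne_zero]
  have h3 : (1 : ℂ) * (2 * (Real.pi : ℂ) * Complex.I)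
      = (3 * n) * (2 * (Real.pi : ℂ) * Complex.I) := by
    linear_combination 3 * hn
  have h4 : (1 : ℂ) = 3 * n := mul_right_cancel₀ h2 h3
  have h5 : (1 : ℤ) = 3 * n := by exact_mod_cast h4
  omega

lemma orderOf_jC : orderOf jC = 3 := by
  haveI : Fact (Nat.Prime 3) := ⟨by norm_num⟩
  exact orderOf_eq_prime jC_cube jC_ne_one

lemma jC_torsion : jC ∈ CommGroup.torsion ℂˣ := by
  rw [CommGroup.mem_torsion, isOfFinOrder_iff_pow_eq_one]
  exact ⟨3, by norm_num, jC_cube⟩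

/-- `q ^ z` is torsion iff `z = 0`. -/
lemma q_zpow_torsion_iff (q : ℂˣ) (hq : ∀ n : ℕ, 0 < n → (q : ℂ) ^ n ≠ 1) (z : ℤ) :
    q ^ z ∈ CommGroup.torsion ℂˣ ↔ z = 0 := by
  rw [CommGroup.mem_torsion, isOfFinOrder_iff_pow_eq_one]
  constructor
  · rintro ⟨N, hN, hp⟩
    have h1 : q ^ (z * N) = 1 := by rw [zpow_mul q z N, zpow_natCast]; exact_mod_cast hp
    have h0 := hqZ q hq _ h1
    rcases mul_eq_zero.mp h0 with h1 | h1
    · exact h1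
    · exact absurd h1 (by positivity)
  · rintro rfl; exact ⟨1, one_pos, by simp⟩

/-- `jC ^ z ∈ ⟨q⟩` iff `3 ∣ z`. -/
lemma jC_zpow_mem_iff (q : ℂˣ) (hq : ∀ n : ℕ, 0 < n → (q : ℂ) ^ n ≠ 1) (z : ℤ) :
    jC ^ z ∈ Subgroup.zpowers q ↔ (3:ℤ) ∣ z := by
  constructor
  · intro h
    rw [Subgroup.mem_zpowers_iff] at h
    obtain ⟨n, hn⟩ := h
    have h3 : q ^ (n * 3) = 1 := by
      rw [zpow_mul q n 3, hn, ← zpow_mul jC z 3, mul_comm, zpow_mul jC 3 z,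
        show (jC ^ (3:ℤ)) = 1 by rw [show (3:ℤ) = ((3:ℕ):ℤ) from rfl, zpow_natCast, jC_cube]]
      exact one_zpow z
    have h0 := hqZ q hq _ h3
    have hn0 : n = 0 := by omega
    rw [hn0, zpow_zero] at hn
    have hz : jC ^ z = 1 := hn.symm
    have := orderOf_dvd_iff_zpow_eq_one.mpr hz
    rw [orderOf_jC] at this
    exact_mod_cast this
  · rintro ⟨t, rfl⟩
    rw [zpow_mul jC 3 t,
      show (jC ^ (3:ℤ)) = 1 by rw [show (3:ℤ) = ((3:ℕ):ℤ) from rfl, zpow_natCast, jC_cube],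
      one_zpow]
    exact one_mem _

/-- The map collapsing a generator index to its "generic" shadow. -/
def emap (q : ℂˣ) : Fin 2 × ℂˣ → Fin 2 × Qt × Rt q :=
  fun x => (x.1, (x.2 : Qt), (x.2 : Rt q))

/-- The induced homomorphism of free abelian groups. -/
def Phi (q : ℂˣ) : Mon2 →+ ((Fin 2 × Qt × Rt q) →₀ ℤ) :=
  Finsupp.mapDomain.addMonoidHom (emap q)

/-- The coefficient of the shadow monomial at `g`. -/
def Cg (q : ℂˣ) (g : Fin 2 × Qt × Rt q) : Mon2 →+ ℤ :=
  (Finsupp.applyAddHom g).comp (Phi q)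

/-- The shadow of `Z_{1, a q^m jC^r}`. -/
def idx1 (q a : ℂˣ) (m r : ℕ) : Fin 2 × Qt × Rt q :=
  (0, ((a * q ^ m : ℂˣ) : Qt), ((a * jC ^ r : ℂˣ) : Rt q))

/-- The shadow of `Z_{2, a^3 q^m}`. -/
def idx2 (q a : ℂˣ) (m : ℕ) : Fin 2 × Qt × Rt q :=
  (1, ((a ^ 3 * q ^ m : ℂˣ) : Qt), ((a ^ 3 : ℂˣ) : Rt q))

open Classical in
lemma Cg_Zv (q : ℂˣ) (g : Fin 2 × Qt × Rt q) (i : Fin 2) (b : ℂˣ) :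
    Cg q g (Zv i b) = if emap q (i, b) = g then 1 else 0 := by
  simp [Cg, Phi, Zv, Finsupp.mapDomain_single, Finsupp.single_apply]

lemma emQ (x y : ℂˣ) (h : x⁻¹ * y ∈ CommGroup.torsion ℂˣ) : (x : Qt) = (y : Qt) :=
  QuotientGroup.eq.mpr h

lemma emR (q x y : ℂˣ) (h : x⁻¹ * y ∈ Subgroup.zpowers q) : (x : Rt q) = (y : Rt q) :=
  QuotientGroup.eq.mpr h

lemma inv_mul_mul {G : Type*} [CommGroup G] (a x y : G) :
    (a * x)⁻¹ * (a * y) = x⁻¹ * y := by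
  rw [mul_inv_rev, mul_assoc, inv_mul_cancel_left, mul_comm]

lemma zpow_diff {G : Type*} [CommGroup G] (g : G) (m m' : ℕ) :
    (g ^ m)⁻¹ * g ^ m' = g ^ ((m':ℤ) - m) := by
  rw [← zpow_natCast g m, ← zpow_natCast g m', ← zpow_neg, ← zpow_add]
  congr 1
  omega

lemma em1 (q a : ℂˣ) (m r : ℕ) : emap q (0, a * q ^ m * jC ^ r) = idx1 q a m r := by
  refine Prod.ext rfl (Prod.ext ?_ ?_)
  · refine (emQ _ _ ?_).symm
    rw [show (a * q ^ m)⁻¹ * (a * q ^ m * jC ^ r) = jC ^ r from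
      inv_mul_eq_iff_eq_mul.mpr rfl]
    exact Subgroup.pow_mem _ jC_torsion r
  · refine (emR q _ _ ?_).symm
    rw [show a * q ^ m * jC ^ r = (a * jC ^ r) * (q ^ m) by
      rw [mul_assoc, mul_comm (q ^ m), mul_assoc]]
    rw [inv_mul_cancel_left]
    exact Subgroup.pow_mem _ (Subgroup.mem_zpowers q) m

lemma em3 (q a : ℂˣ) (m : ℕ) : emap q (1, a ^ 3 * q ^ m) = idx2 q a m := by
  refine Prod.ext rfl (Prod.ext rfl ?_)
  refine (emR q _ _ ?_).symm
  rw [show (a ^ 3)⁻¹ * (a ^ 3 * q ^ m) = q ^ m from inv_mul_eq_iff_eq_mul.mpr rfl]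
  exact Subgroup.pow_mem _ (Subgroup.mem_zpowers q) m

lemma em0' (q a : ℂˣ) (m : ℕ) : emap q (0, a * q ^ m) = idx1 q a m 0 := by
  have := em1 q a m 0
  rwa [pow_zero, mul_one] at this

lemma em1' (q a : ℂˣ) (m : ℕ) : emap q (0, a * q ^ m * jC) = idx1 q a m 1 := by
  have := em1 q a m 1
  rwa [pow_one] at this

lemma em2' (q a : ℂˣ) (m : ℕ) : emap q (0, a * q ^ m * jC ^ 2) = idx1 q a m 2 :=
  em1 q a m 2

lemma idx1_eq_iff (q : ℂˣ) (hq : ∀ n : ℕ, 0 < n → (q : ℂ) ^ n ≠ 1) (a : ℂˣ)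
    (m r m' r' : ℕ) :
    idx1 q a m r = idx1 q a m' r' ↔ (m = m' ∧ (3:ℤ) ∣ (r':ℤ) - r) := by
  simp only [idx1, Prod.mk.injEq, true_and]
  rw [QuotientGroup.eq, QuotientGroup.eq, inv_mul_mul, inv_mul_mul,
    zpow_diff, zpow_diff, q_zpow_torsion_iff q hq, jC_zpow_mem_iff q hq]
  omega

lemma idx2_eq_iff (q : ℂˣ) (hq : ∀ n : ℕ, 0 < n → (q : ℂ) ^ n ≠ 1) (a : ℂˣ) (m m' : ℕ) :
    idx2 q a m = idx2 q a m' ↔ m = m' := by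
  simp only [idx2, Prod.mk.injEq, true_and, and_true]
  rw [QuotientGroup.eq, inv_mul_mul, zpow_diff, q_zpow_torsion_iff q hq]
  omega

@[simp] lemma idx1_ne_idx2 (q a a' : ℂˣ) (m r m' : ℕ) :
    idx1 q a m r = idx2 q a' m' ↔ False := by
  simp [idx1, idx2, Prod.ext_iff, Fin.ext_iff]

@[simp] lemma idx2_ne_idx1 (q a a' : ℂˣ) (m r m' : ℕ) :
    idx2 q a' m' = idx1 q a m r ↔ False := by
  simp [idx1, idx2, Prod.ext_iff, Fin.ext_iff]

lemma par (q a : ℂˣ) (n s : ℕ) : a * q ^ n * q ^ s = a * q ^ (n + s) := by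
  rw [mul_assoc, ← pow_add]

lemma par3 (q a : ℂˣ) (n s : ℕ) : (a * q ^ n) ^ 3 * q ^ s = a ^ 3 * q ^ (n * 3 + s) := by
  rw [mul_pow, ← pow_mul, mul_assoc, ← pow_add]

/-! #### Coefficients of a single box -/

lemma cg_box_D1 (q : ℂˣ) (hq : ∀ n : ℕ, 0 < n → (q : ℂ) ^ n ≠ 1) (a : ℂˣ) (p : ℕ) (β : BB) :
    Cg q (idx1 q a 0 0) (box q β (a * q ^ (2 * p))) =
      if p = 0 ∧ β = BB.b1 then 1 else 0 := by
  cases β <;>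
    simp [box, map_add, map_neg, map_sub, Cg_Zv, par, par3, em0', em1', em2', em3,
      idx1_eq_iff q hq, idx2_eq_iff q hq] <;>
    first
      | omega
      | (split_ifs <;> omega)

lemma cg_box_D2 (q : ℂˣ) (hq : ∀ n : ℕ, 0 < n → (q : ℂ) ^ n ≠ 1) (a : ℂˣ) (p : ℕ) (β : BB) :
    Cg q (idx2 q a 3) (box q β (a * q ^ (2 * p))) =
      if p = 0 ∧ β = BB.b2 then 1 else 0 := by
  cases β <;>
    simp [box, map_add, map_neg, map_sub, Cg_Zv, par, par3, em0', em1', em2', em3,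
      idx1_eq_iff q hq, idx2_eq_iff q hq] <;>
    first
      | omega
      | (split_ifs <;> omega)

lemma cg_box_D3 (q : ℂˣ) (hq : ∀ n : ℕ, 0 < n → (q : ℂ) ^ n ≠ 1) (a : ℂˣ) (p : ℕ) (β : BB) :
    Cg q (idx1 q a 2 1) (box q β (a * q ^ (2 * p))) =
      if p = 0 ∧ (β = BB.b3 ∨ β = BB.b4) then 1 else 0 := by
  cases β <;>
    simp [box, map_add, map_neg, map_sub, Cg_Zv, par, par3, em0', em1', em2', em3,
      idx1_eq_iff q hq, idx2_eq_iff q hq] <;>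
    first
      | omega
      | (split_ifs <;> omega)

lemma cg_box_D4 (q : ℂˣ) (hq : ∀ n : ℕ, 0 < n → (q : ℂ) ^ n ≠ 1) (a : ℂˣ) (p : ℕ) (β : BB) :
    Cg q (idx1 q a 2 2) (box q β (a * q ^ (2 * p))) =
      if p = 0 ∧ (β = BB.b3 ∨ β = BB.b4') then 1 else 0 := by
  cases β <;>
    simp [box, map_add, map_neg, map_sub, Cg_Zv, par, par3, em0', em1', em2', em3,
      idx1_eq_iff q hq, idx2_eq_iff q hq] <;>
    first
      | omega
      | (split_ifs <;> omega)

lemma cg_box_D5 (q : ℂˣ) (hq : ∀ n : ℕ, 0 < n → (q : ℂ) ^ n ≠ 1) (a : ℂˣ) (p : ℕ) (β : BB) :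
    Cg q (idx1 q a 4 1) (box q β (a * q ^ (2 * p))) =
      if p = 0 ∧ (β = BB.b4' ∨ β = BB.b3') then -1
      else if p = 1 ∧ (β = BB.b3 ∨ β = BB.b4) then 1 else 0 := by
  cases β <;>
    simp [box, map_add, map_neg, map_sub, Cg_Zv, par, par3, em0', em1', em2', em3,
      idx1_eq_iff q hq, idx2_eq_iff q hq] <;>
    first
      | omega
      | (split_ifs <;> omega)

lemma cg_box_D6 (q : ℂˣ) (hq : ∀ n : ℕ, 0 < n → (q : ℂ) ^ n ≠ 1) (a : ℂˣ) (p : ℕ) (β : BB) :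
    Cg q (idx1 q a 4 0) (box q β (a * q ^ (2 * p))) =
      if p = 0 ∧ β = BB.b2' then 1
      else if p = 1 ∧ β = BB.b2 then -1
      else if p = 2 ∧ β = BB.b1 then 1 else 0 := by
  cases β <;>
    simp [box, map_add, map_neg, map_sub, Cg_Zv, par, par3, em0', em1', em2', em3,
      idx1_eq_iff q hq, idx2_eq_iff q hq] <;>
    first
      | omega
      | (split_ifs <;> omega)

/-! #### Summation machinery -/

/-- Totalisation of a tableau, with junk value `b1'`. -/
def extT {k : ℕ} (T : Fin k → BB) (n : ℕ) : BB :=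
  if h : n < k then T ⟨n, h⟩ else BB.b1'

lemma extT_eq {k : ℕ} (T : Fin k → BB) (p : Fin k) {n : ℕ} (h : (p : ℕ) = n) :
    extT T n = T p := by
  subst h
  rw [extT, dif_pos p.isLt, Fin.eta]

lemma sum_ind {k : ℕ} (i : ℕ) (c : ℤ) :
    (∑ p : Fin k, if (p : ℕ) = i then c else 0) = if i < k then c else 0 := by
  by_cases h : i < k
  · rw [if_pos h, Finset.sum_eq_single (⟨i, h⟩ : Fin k)]
    · simp
    · intro b _ hb
      rw [if_neg]
      intro hv
      exact hb (Fin.ext hv)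
    · intro hmem
      exact absurd (Finset.mem_univ _) hmem
  · rw [if_neg h, Finset.sum_eq_zero]
    intro p _
    rw [if_neg]
    intro hv
    exact h (hv ▸ p.isLt)

lemma sum3 {k : ℕ} (f : Fin k → ℤ) (c0 c1 c2 : ℤ)
    (h : ∀ p : Fin k, f p =
      (if (p : ℕ) = 0 then c0 else 0) + (if (p : ℕ) = 1 then c1 else 0)
        + (if (p : ℕ) = 2 then c2 else 0)) :
    (∑ p : Fin k, f p) =
      (if 0 < k then c0 else 0) + (if 1 < k then c1 else 0) + (if 2 < k then c2 else 0) := by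
  rw [Finset.sum_congr rfl (fun p _ => h p), Finset.sum_add_distrib, Finset.sum_add_distrib,
    sum_ind, sum_ind, sum_ind]

/-! #### The six detector coefficients of `m1` -/

lemma D1_val (q : ℂˣ) (hq : ∀ n : ℕ, 0 < n → (q : ℂ) ^ n ≠ 1) {k : ℕ} (T : Fin k → BB)
    (a : ℂˣ) :
    Cg q (idx1 q a 0 0) (m1 q T a) = (if extT T 0 = BB.b1 then 1 else 0) := by
  have hpt : ∀ p : Fin k,
      Cg q (idx1 q a 0 0) (box q (T p) (a * q ^ (2 * (p : ℕ)))) =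
        (if (p : ℕ) = 0 then (if extT T 0 = BB.b1 then 1 else 0) else 0)
          + (if (p : ℕ) = 1 then 0 else 0) + (if (p : ℕ) = 2 then 0 else 0) := by
    intro p
    rw [cg_box_D1 q hq a (p : ℕ) (T p)]
    by_cases hp : (p : ℕ) = 0
    · rw [extT_eq T p hp]; simp [hp]
    · simp [hp]
  rw [m1, map_sum, sum3 _ _ _ _ hpt]
  by_cases h0 : 0 < k
  · simp [h0]
  · simp [extT, h0]

lemma D2_val (q : ℂˣ) (hq : ∀ n : ℕ, 0 < n → (q : ℂ) ^ n ≠ 1) {k : ℕ} (T : Fin k → BB)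
    (a : ℂˣ) :
    Cg q (idx2 q a 3) (m1 q T a) = (if extT T 0 = BB.b2 then 1 else 0) := by
  have hpt : ∀ p : Fin k,
      Cg q (idx2 q a 3) (box q (T p) (a * q ^ (2 * (p : ℕ)))) =
        (if (p : ℕ) = 0 then (if extT T 0 = BB.b2 then 1 else 0) else 0)
          + (if (p : ℕ) = 1 then 0 else 0) + (if (p : ℕ) = 2 then 0 else 0) := by
    intro p
    rw [cg_box_D2 q hq a (p : ℕ) (T p)]
    by_cases hp : (p : ℕ) = 0
    · rw [extT_eq T p hp]; simp [hp]
    · simp [hp]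
  rw [m1, map_sum, sum3 _ _ _ _ hpt]
  by_cases h0 : 0 < k
  · simp [h0]
  · simp [extT, h0]

lemma D3_val (q : ℂˣ) (hq : ∀ n : ℕ, 0 < n → (q : ℂ) ^ n ≠ 1) {k : ℕ} (T : Fin k → BB)
    (a : ℂˣ) :
    Cg q (idx1 q a 2 1) (m1 q T a) =
      (if extT T 0 = BB.b3 ∨ extT T 0 = BB.b4 then 1 else 0) := by
  have hpt : ∀ p : Fin k,
      Cg q (idx1 q a 2 1) (box q (T p) (a * q ^ (2 * (p : ℕ)))) =
        (if (p : ℕ) = 0 then (if extT T 0 = BB.b3 ∨ extT T 0 = BB.b4 then 1 else 0) else 0)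
          + (if (p : ℕ) = 1 then 0 else 0) + (if (p : ℕ) = 2 then 0 else 0) := by
    intro p
    rw [cg_box_D3 q hq a (p : ℕ) (T p)]
    by_cases hp : (p : ℕ) = 0
    · rw [extT_eq T p hp]; simp [hp]
    · simp [hp]
  rw [m1, map_sum, sum3 _ _ _ _ hpt]
  by_cases h0 : 0 < k
  · simp [h0]
  · simp [extT, h0]

lemma D4_val (q : ℂˣ) (hq : ∀ n : ℕ, 0 < n → (q : ℂ) ^ n ≠ 1) {k : ℕ} (T : Fin k → BB)
    (a : ℂˣ) :
    Cg q (idx1 q a 2 2) (m1 q T a) =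
      (if extT T 0 = BB.b3 ∨ extT T 0 = BB.b4' then 1 else 0) := by
  have hpt : ∀ p : Fin k,
      Cg q (idx1 q a 2 2) (box q (T p) (a * q ^ (2 * (p : ℕ)))) =
        (if (p : ℕ) = 0 then (if extT T 0 = BB.b3 ∨ extT T 0 = BB.b4' then 1 else 0) else 0)
          + (if (p : ℕ) = 1 then 0 else 0) + (if (p : ℕ) = 2 then 0 else 0) := by
    intro p
    rw [cg_box_D4 q hq a (p : ℕ) (T p)]
    by_cases hp : (p : ℕ) = 0
    · rw [extT_eq T p hp]; simp [hp]
    · simp [hp]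
  rw [m1, map_sum, sum3 _ _ _ _ hpt]
  by_cases h0 : 0 < k
  · simp [h0]
  · simp [extT, h0]

lemma D5_val (q : ℂˣ) (hq : ∀ n : ℕ, 0 < n → (q : ℂ) ^ n ≠ 1) {k : ℕ} (T : Fin k → BB)
    (a : ℂˣ) :
    Cg q (idx1 q a 4 1) (m1 q T a) =
      (if extT T 0 = BB.b4' ∨ extT T 0 = BB.b3' then -1 else 0)
        + (if extT T 1 = BB.b3 ∨ extT T 1 = BB.b4 then 1 else 0) := by
  have hpt : ∀ p : Fin k,
      Cg q (idx1 q a 4 1) (box q (T p) (a * q ^ (2 * (p : ℕ)))) =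
        (if (p : ℕ) = 0 then (if extT T 0 = BB.b4' ∨ extT T 0 = BB.b3' then -1 else 0) else 0)
          + (if (p : ℕ) = 1 then (if extT T 1 = BB.b3 ∨ extT T 1 = BB.b4 then 1 else 0) else 0)
          + (if (p : ℕ) = 2 then 0 else 0) := by
    intro p
    rw [cg_box_D5 q hq a (p : ℕ) (T p)]
    by_cases hp : (p : ℕ) = 0
    · rw [extT_eq T p hp]; simp [hp]
    · by_cases hp1 : (p : ℕ) = 1
      · rw [extT_eq T p hp1]; simp [hp, hp1]
      · simp [hp, hp1]
  rw [m1, map_sum, sum3 _ _ _ _ hpt]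
  by_cases h0 : 0 < k
  · by_cases h1 : 1 < k
    · simp [h0, h1]
    · have e1 : extT T 1 = BB.b1' := dif_neg h1
      simp [h0, h1, e1]
  · have e0 : extT T 0 = BB.b1' := dif_neg h0
    have e1 : extT T 1 = BB.b1' := dif_neg (by omega)
    simp [h0, e0, e1]

lemma D6_val (q : ℂˣ) (hq : ∀ n : ℕ, 0 < n → (q : ℂ) ^ n ≠ 1) {k : ℕ} (T : Fin k → BB)
    (a : ℂˣ) :
    Cg q (idx1 q a 4 0) (m1 q T a) =
      (if extT T 0 = BB.b2' then 1 else 0)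
        + (if extT T 1 = BB.b2 then -1 else 0)
        + (if extT T 2 = BB.b1 then 1 else 0) := by
  have hpt : ∀ p : Fin k,
      Cg q (idx1 q a 4 0) (box q (T p) (a * q ^ (2 * (p : ℕ)))) =
        (if (p : ℕ) = 0 then (if extT T 0 = BB.b2' then 1 else 0) else 0)
          + (if (p : ℕ) = 1 then (if extT T 1 = BB.b2 then -1 else 0) else 0)
          + (if (p : ℕ) = 2 then (if extT T 2 = BB.b1 then 1 else 0) else 0) := by
    intro p
    rw [cg_box_D6 q hq a (p : ℕ) (T p)]
    by_cases hp : (p : ℕ) = 0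
    · rw [extT_eq T p hp]; simp [hp]
    · by_cases hp1 : (p : ℕ) = 1
      · rw [extT_eq T p hp1]; simp [hp, hp1]
      · by_cases hp2 : (p : ℕ) = 2
        · rw [extT_eq T p hp2]; simp [hp, hp1, hp2]
        · simp [hp, hp1, hp2]
  rw [m1, map_sum, sum3 _ _ _ _ hpt]
  by_cases h0 : 0 < k
  · by_cases h1 : 1 < k
    · by_cases h2 : 2 < k
      · simp [h0, h1, h2]
      · have e2 : extT T 2 = BB.b1' := dif_neg h2
        simp [h0, h1, h2, e2]
    · have e1 : extT T 1 = BB.b1' := dif_neg h1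
      have e2 : extT T 2 = BB.b1' := dif_neg (by omega)
      simp [h0, h1, e1, e2]
  · have e0 : extT T 0 = BB.b1' := dif_neg h0
    have e1 : extT T 1 = BB.b1' := dif_neg (by omega)
    have e2 : extT T 2 = BB.b1' := dif_neg (by omega)
    simp [h0, e0, e1, e2]

/-! #### Combinatorics of first entries -/

lemma ind_eq {P Q : Prop} [Decidable P] [Decidable Q] {c : ℤ} (hc : c ≠ 0)
    (h : (if P then c else 0) = (if Q then c else 0)) : P ↔ Q := by
  split_ifs at h <;> first | tauto | simp_all

lemma rank_ge4 : ∀ y : BB, y ≠ BB.b1 → y ≠ BB.b2 → ¬(y = BB.b3 ∨ y = BB.b4) →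
    ¬(y = BB.b3 ∨ y = BB.b4') → 4 ≤ y.rank := by intro y; cases y <;> decide

lemma rank_ge5 : ∀ y : BB, 4 ≤ y.rank → ¬(y = BB.b4' ∨ y = BB.b3') → 5 ≤ y.rank := by
  intro y; cases y <;> decide

lemma not34 : ∀ w : BB, 4 ≤ w.rank → ¬(w = BB.b3 ∨ w = BB.b4) := by
  intro w; cases w <;> decide
lemma notb2 : ∀ w : BB, 5 ≤ w.rank → ¬(w = BB.b2) := by
  intro w; cases w <;> decide
lemma notb1 : ∀ w : BB, 5 ≤ w.rank → ¬(w = BB.b1) := by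
  intro w; cases w <;> decide
lemma eq_of_high : ∀ x y : BB, 5 ≤ x.rank → 5 ≤ y.rank → (x = BB.b2' ↔ y = BB.b2') →
    x = y := by intro x y; cases x <;> cases y <;> decide

lemma combinat (x y u1 u2 v1 v2 : BB)
    (i1 : (x = BB.b1 ↔ y = BB.b1))
    (i2 : (x = BB.b2 ↔ y = BB.b2))
    (i3 : ((x = BB.b3 ∨ x = BB.b4) ↔ (y = BB.b3 ∨ y = BB.b4)))
    (i4 : ((x = BB.b3 ∨ x = BB.b4') ↔ (y = BB.b3 ∨ y = BB.b4')))
    (d5 : (if x = BB.b4' ∨ x = BB.b3' then (-1:ℤ) else 0)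
            + (if u1 = BB.b3 ∨ u1 = BB.b4 then 1 else 0)
        = (if y = BB.b4' ∨ y = BB.b3' then (-1:ℤ) else 0)
            + (if v1 = BB.b3 ∨ v1 = BB.b4 then 1 else 0))
    (d6 : (if x = BB.b2' then (1:ℤ) else 0) + (if u1 = BB.b2 then -1 else 0)
            + (if u2 = BB.b1 then 1 else 0)
        = (if y = BB.b2' then (1:ℤ) else 0) + (if v1 = BB.b2 then -1 else 0)
            + (if v2 = BB.b1 then 1 else 0))
    (mu1 : x.rank ≤ u1.rank) (mu2 : x.rank ≤ u2.rank)
    (mv1 : y.rank ≤ v1.rank) (mv2 : y.rank ≤ v2.rank) : x = y := by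
  by_cases hx1 : x = BB.b1
  · exact hx1.trans (i1.mp hx1).symm
  by_cases hx2 : x = BB.b2
  · exact hx2.trans (i2.mp hx2).symm
  by_cases hx3 : x = BB.b3
  · rcases i3.mp (Or.inl hx3) with h3 | h3
    · exact hx3.trans h3.symm
    · rcases i4.mp (Or.inl hx3) with h4 | h4
      · exact hx3.trans h4.symm
      · rw [h4] at h3; exact absurd h3 (by decide)
  by_cases hx4 : x = BB.b4
  · rcases i3.mp (Or.inr hx4) with h3 | h3
    · have := i4.mpr (Or.inl h3)
      rcases this with h | h
      · exact absurd (hx4.symm.trans h) (by decide)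
      · exact absurd (hx4.symm.trans h) (by decide)
    · exact hx4.trans h3.symm
  by_cases hx4' : x = BB.b4'
  · rcases i4.mp (Or.inr hx4') with h4 | h4
    · have := i3.mpr (Or.inl h4)
      rcases this with h | h
      · exact absurd (hx4'.symm.trans h) (by decide)
      · exact absurd (hx4'.symm.trans h) (by decide)
    · exact hx4'.trans h4.symm
  have hx34 : ¬(x = BB.b3 ∨ x = BB.b4) := by tauto
  have hx34' : ¬(x = BB.b3 ∨ x = BB.b4') := by tauto
  have hy1 : y ≠ BB.b1 := fun hh => hx1 (i1.mpr hh)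
  have hy2 : y ≠ BB.b2 := fun hh => hx2 (i2.mpr hh)
  have hy34 : ¬(y = BB.b3 ∨ y = BB.b4) := fun hh => hx34 (i3.mpr hh)
  have hy34' : ¬(y = BB.b3 ∨ y = BB.b4') := fun hh => hx34' (i4.mpr hh)
  have hxr : 4 ≤ x.rank := rank_ge4 x hx1 hx2 hx34 hx34'
  have hyr : 4 ≤ y.rank := rank_ge4 y hy1 hy2 hy34 hy34'
  rw [if_neg (not34 u1 (le_trans hxr mu1)), if_neg (not34 v1 (le_trans hyr mv1)),
    add_zero, add_zero] at d5
  have i5 := ind_eq (c := (-1 : ℤ)) (by norm_num) d5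
  by_cases hx3' : x = BB.b3'
  · rcases i5.mp (Or.inr hx3') with h5 | h5
    · exact absurd (Or.inr h5) hy34'
    · exact hx3'.trans h5.symm
  have hx43 : ¬(x = BB.b4' ∨ x = BB.b3') := by tauto
  have hy43 : ¬(y = BB.b4' ∨ y = BB.b3') := fun hh => hx43 (i5.mpr hh)
  have hxr5 : 5 ≤ x.rank := rank_ge5 x hxr hx43
  have hyr5 : 5 ≤ y.rank := rank_ge5 y hyr hy43
  rw [if_neg (notb2 u1 (le_trans hxr5 mu1)), if_neg (notb1 u2 (le_trans hxr5 mu2)),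
    if_neg (notb2 v1 (le_trans hyr5 mv1)), if_neg (notb1 v2 (le_trans hyr5 mv2)),
    add_zero, add_zero, add_zero, add_zero] at d6
  exact eq_of_high x y hxr5 hyr5 (ind_eq one_ne_zero d6)

/-! #### Rank monotonicity along a tableau -/

lemma rank_le_of_le {x y : BB} (h : BB.le x y) : x.rank ≤ y.rank := by
  have h' : x = y ∨ x.rank < y.rank := h
  rcases h' with rfl | h'
  · exact le_refl _
  · exact le_of_lt h'

lemma extT_rank_mono {k : ℕ} {T : Fin k → BB} (hT : IsTab1 k T) (n : ℕ) :
    (extT T 0).rank ≤ (extT T n).rank := by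
  induction n with
  | zero => exact le_refl _
  | succ n ih =>
    by_cases h : n + 1 < k
    · have hn : n < k := by omega
      have step := rank_le_of_le (hT n h)
      have e1 : extT T n = T ⟨n, hn⟩ := dif_pos hn
      have e2 : extT T (n + 1) = T ⟨n + 1, h⟩ := dif_pos h
      rw [e1] at ih
      rw [e2]
      exact le_trans ih step
    · rw [show extT T (n+1) = BB.b1' from dif_neg h]
      have hall : ∀ x : BB, x.rank ≤ BB.b1'.rank := by intro x; cases x <;> decide
      exact hall _

/-! #### Equality of the first entries -/

lemma head_eq (q : ℂˣ) (hq : ∀ n : ℕ, 0 < n → (q : ℂ) ^ n ≠ 1) {k : ℕ}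
    {T T' : Fin k → BB} (hT : IsTab1 k T) (hT' : IsTab1 k T') (a : ℂˣ)
    (h : m1 q T a = m1 q T' a) : extT T 0 = extT T' 0 := by
  have d1 := congrArg (fun z => Cg q (idx1 q a 0 0) z) h
  rw [D1_val q hq T a, D1_val q hq T' a] at d1
  have d2 := congrArg (fun z => Cg q (idx2 q a 3) z) h
  rw [D2_val q hq T a, D2_val q hq T' a] at d2
  have d3 := congrArg (fun z => Cg q (idx1 q a 2 1) z) h
  rw [D3_val q hq T a, D3_val q hq T' a] at d3
  have d4 := congrArg (fun z => Cg q (idx1 q a 2 2) z) h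
  rw [D4_val q hq T a, D4_val q hq T' a] at d4
  have d5 := congrArg (fun z => Cg q (idx1 q a 4 1) z) h
  rw [D5_val q hq T a, D5_val q hq T' a] at d5
  have d6 := congrArg (fun z => Cg q (idx1 q a 4 0) z) h
  rw [D6_val q hq T a, D6_val q hq T' a] at d6
  exact combinat (extT T 0) (extT T' 0) (extT T 1) (extT T 2) (extT T' 1) (extT T' 2)
    (ind_eq one_ne_zero d1) (ind_eq one_ne_zero d2) (ind_eq one_ne_zero d3)
    (ind_eq one_ne_zero d4) d5 d6
    (extT_rank_mono hT 1) (extT_rank_mono hT 2)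
    (extT_rank_mono hT' 1) (extT_rank_mono hT' 2)

/-! #### Tails of tableaux and the main induction -/

lemma tab_tail {k : ℕ} {T : Fin (k+1) → BB} (hT : IsTab1 (k+1) T) :
    IsTab1 k (fun p => T p.succ) := by
  intro p h
  have := hT (p + 1) (by omega)
  simpa [Fin.succ_mk] using this

lemma m1_succ (q : ℂˣ) {k : ℕ} (T : Fin (k+1) → BB) (a : ℂˣ) :
    m1 q T a = box q (T 0) (a * q ^ (2 * ((0 : Fin (k+1)) : ℕ)))
      + m1 q (fun p => T p.succ) (a * q ^ 2) := by
  rw [m1, Fin.sum_univ_succ, m1]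
  congr 1
  refine Finset.sum_congr rfl (fun p _ => ?_)
  rw [Fin.val_succ, show 2 * ((p:ℕ) + 1) = 2 + 2 * (p:ℕ) from by omega, pow_add,
    ← mul_assoc]

lemma main_induction (q : ℂˣ) (hq : ∀ n : ℕ, 0 < n → (q : ℂ) ^ n ≠ 1) :
    ∀ (k : ℕ) (a : ℂˣ) (T T' : Fin k → BB), IsTab1 k T → IsTab1 k T' →
      m1 q T a = m1 q T' a → T = T' := by
  intro k
  induction k with
  | zero =>
    intro a T T' _ _ _
    funext p
    exact absurd p.isLt (by omega)
  | succ n ih =>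
    intro a T T' hT hT' h
    have h0 : T 0 = T' 0 := by
      have hh := head_eq q hq hT hT' a h
      rwa [extT_eq T (0 : Fin (n+1)) (n := 0) (by simp),
        extT_eq T' (0 : Fin (n+1)) (n := 0) (by simp)] at hh
    have htail : m1 q (fun p => T p.succ) (a * q ^ 2)
        = m1 q (fun p => T' p.succ) (a * q ^ 2) := by
      have e := m1_succ q T a
      have e' := m1_succ q T' a
      rw [e, e', h0] at h
      exact add_left_cancel h
    have hT2 := ih (a * q ^ 2) _ _ (tab_tail hT) (tab_tail hT') htail
    funext p
    refine Fin.cases ?_ ?_ p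
    · exact h0
    · intro i
      exact congrFun hT2 i

end M1InjAux

/-- The map `T ↦ m^{(1)}_{T,a}` is injective on `Tab(1,k)`. -/
theorem m1_injective (q : ℂˣ) (hq : ∀ n : ℕ, 0 < n → (q : ℂ) ^ n ≠ 1)
    (k : ℕ) (hk : 1 ≤ k) (a : ℂˣ) :
    Set.InjOn (fun T : Fin k → BB => m1 q T a) {T | IsTab1 k T} := by
  intro T hT T' hT' h
  exact M1InjAux.main_induction q hq k a T T' hT hT' h
end
end

section
/- With the notion of right-negative monomial defined in the context: (1) for every a ∈ ℂ∖{0}, the monomial A_a^{-1} = Z_{aq}^{-1}·Z_{aq^{-1}}^{-1}·Z_{−a} is right-negative; (2) the product of two right-negative monomials is right-negative; (3) if m is right-negative and m' = m·∏_{l=1}^{N} A_{b_l}^{-1} for some N ≥ 0 and b_1,…,b_N ∈ ℂ∖{0} (i.e. m' ≤ m in the sense of monomials), then m' is right-negative. In particular a right-negative monomial is not dominant. -/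
noncomputable section

/-- Monomials: the free abelian group on `ℂˣ` written additively;
`Finsupp.single a 1` corresponds to the generator `Z_a`. -/
abbrev Mon : Type := ℂˣ →₀ ℤ

/-- The generator `Z_a` of the free abelian group of monomials. -/
def Z (a : ℂˣ) : Mon := Finsupp.single a 1

/-- `A_a = Z_{aq} · Z_{aq⁻¹} · Z_{-a}⁻¹` (written additively). -/
def A (q a : ℂˣ) : Mon := Z (a * q) + Z (a * q⁻¹) - Z (-a)

/-- A monomial is dominant if all its exponents are nonnegative. -/
def Dominant (m : Mon) : Prop := ∀ a : ℂˣ, 0 ≤ m a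

/-- A monomial `m` is right-negative if for every `a ∈ ℂ∖{0}` for which the set
`S_a(m) = {l ∈ ℤ : z_{aq^l}(m) ≠ 0 or z_{-aq^l}(m) ≠ 0}` is nonempty, at its maximum `L`
one has `z_{aq^L}(m) ≤ 0` and `z_{-aq^L}(m) ≤ 0`.  (Here `L` being the maximum is expressed
by `L ∈ S_a(m)` together with `L` being an upper bound of `S_a(m)`.) -/
def RightNeg (q : ℂˣ) (m : Mon) : Prop :=
  ∀ (a : ℂˣ) (L : ℤ),
    (m (a * q ^ L) ≠ 0 ∨ m (-(a * q ^ L)) ≠ 0) →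
    (∀ l : ℤ, L < l → m (a * q ^ l) = 0 ∧ m (-(a * q ^ l)) = 0) →
    m (a * q ^ L) ≤ 0 ∧ m (-(a * q ^ L)) ≤ 0

section Aux
variable {q : ℂˣ}

lemma aux_zpow_ne_one (hq : ∀ n : ℕ, 0 < n → (q : ℂ) ^ n ≠ 1) {d : ℤ} (hd : d ≠ 0) :
    q ^ d ≠ 1 := by
  have key : ∀ n : ℕ, 0 < n → q ^ (n : ℤ) ≠ 1 := by
    intro n hn h
    apply hq n hn
    rw [zpow_natCast] at h
    have := congrArg (Units.val) h
    simpa using this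
  intro h
  rcases lt_or_gt_of_ne hd with h' | h'
  · apply key (-d).toNat (by omega)
    have : ((-d).toNat : ℤ) = -d := by omega
    rw [this, zpow_neg, h, inv_one]
  · apply key d.toNat (by omega)
    have : (d.toNat : ℤ) = d := by omega
    rw [this, h]

lemma aux_zpow_inj (hq : ∀ n : ℕ, 0 < n → (q : ℂ) ^ n ≠ 1) :
    Function.Injective (fun l : ℤ => q ^ l) := by
  intro l k h
  by_contra hne
  exact aux_zpow_ne_one hq (sub_ne_zero.2 hne)
    (by rw [zpow_sub]; simp only at h; rw [h]; simp)

lemma finite_S (hq : ∀ n : ℕ, 0 < n → (q : ℂ) ^ n ≠ 1) (m : Mon) (a : ℂˣ) :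
    {l : ℤ | m (a * q ^ l) ≠ 0 ∨ m (-(a * q ^ l)) ≠ 0}.Finite := by
  have hf : Function.Injective (fun l : ℤ => a * q ^ l) :=
    fun l k h => aux_zpow_inj hq (mul_left_cancel h)
  have hg : Function.Injective (fun l : ℤ => -(a * q ^ l)) :=
    fun l k h => hf (neg_injective h)
  have hsub : {l : ℤ | m (a * q ^ l) ≠ 0 ∨ m (-(a * q ^ l)) ≠ 0} ⊆
      (fun l : ℤ => a * q ^ l) ⁻¹' (m.support : Set ℂˣ) ∪
      (fun l : ℤ => -(a * q ^ l)) ⁻¹' (m.support : Set ℂˣ) := by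
    intro l hl
    rcases hl with h | h
    · left; simpa [Finsupp.mem_support_iff] using h
    · right; simpa [Finsupp.mem_support_iff] using h
  exact ((m.support.finite_toSet.preimage hf.injOn).union
    (m.support.finite_toSet.preimage hg.injOn)).subset hsub

lemma exists_bound (hq : ∀ n : ℕ, 0 < n → (q : ℂ) ^ n ≠ 1) (m : Mon) (a : ℂˣ) :
    ∃ K : ℤ, ∀ l, K < l → m (a * q ^ l) = 0 ∧ m (-(a * q ^ l)) = 0 := by
  obtain ⟨K, hK⟩ := (finite_S hq m a).bddAbove
  refine ⟨K, fun l hl => ?_⟩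
  by_contra h
  have hmem : l ∈ {l : ℤ | m (a * q ^ l) ≠ 0 ∨ m (-(a * q ^ l)) ≠ 0} := by
    simp only [Set.mem_setOf_eq]; tauto
  have := hK hmem
  omega

lemma rn_apply {m : Mon} (hm : RightNeg q m) (a : ℂˣ) (L : ℤ)
    (h : ∀ l : ℤ, L < l → m (a * q ^ l) = 0 ∧ m (-(a * q ^ l)) = 0) :
    m (a * q ^ L) ≤ 0 ∧ m (-(a * q ^ L)) ≤ 0 := by
  by_cases h0 : m (a * q ^ L) = 0 ∧ m (-(a * q ^ L)) = 0
  · omega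
  · exact hm a L (by tauto) h

lemma rn_add (hq : ∀ n : ℕ, 0 < n → (q : ℂ) ^ n ≠ 1) {m m' : Mon}
    (hm : RightNeg q m) (hm' : RightNeg q m') : RightNeg q (m + m') := by
  intro a L _ hmax
  obtain ⟨K1, hK1⟩ := exists_bound hq m a
  obtain ⟨K2, hK2⟩ := exists_bound hq m' a
  set K := max (max K1 K2) L with hKdef
  have hle1 : K1 ≤ K := le_trans (le_max_left _ _) (le_max_left _ _)
  have hle2 : K2 ≤ K := le_trans (le_max_right _ _) (le_max_left _ _)
  have hleL : L ≤ K := le_max_right _ _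
  have claim : ∀ n : ℕ, ∀ l : ℤ, L < l → K - n < l →
      m (a * q ^ l) = 0 ∧ m (-(a * q ^ l)) = 0 ∧
      m' (a * q ^ l) = 0 ∧ m' (-(a * q ^ l)) = 0 := by
    intro n
    induction n with
    | zero =>
      intro l hL hKl
      have h1 := hK1 l (by omega)
      have h2 := hK2 l (by omega)
      exact ⟨h1.1, h1.2, h2.1, h2.2⟩
    | succ n ih =>
      intro l hL hKl
      by_cases hc : K - n < l
      · exact ih l hL hc
      · have hl : l = K - n := by omega
        have hvm : ∀ l' : ℤ, l < l' → m (a * q ^ l') = 0 ∧ m (-(a * q ^ l')) = 0 :=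
          fun l' h' => ⟨(ih l' (by omega) (by omega)).1, (ih l' (by omega) (by omega)).2.1⟩
        have hvm' : ∀ l' : ℤ, l < l' → m' (a * q ^ l') = 0 ∧ m' (-(a * q ^ l')) = 0 :=
          fun l' h' => ⟨(ih l' (by omega) (by omega)).2.2.1, (ih l' (by omega) (by omega)).2.2.2⟩
        have p1 := rn_apply hm a l hvm
        have p2 := rn_apply hm' a l hvm'
        have s1 := hmax l hL
        simp only [Finsupp.add_apply] at s1
        refine ⟨by omega, by omega, by omega, by omega⟩
  have hvm : ∀ l : ℤ, L < l → m (a * q ^ l) = 0 ∧ m (-(a * q ^ l)) = 0 :=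
    fun l hl => ⟨(claim (K - L).toNat l hl (by omega)).1, (claim (K - L).toNat l hl (by omega)).2.1⟩
  have hvm' : ∀ l : ℤ, L < l → m' (a * q ^ l) = 0 ∧ m' (-(a * q ^ l)) = 0 :=
    fun l hl => ⟨(claim (K - L).toNat l hl (by omega)).2.2.1,
      (claim (K - L).toNat l hl (by omega)).2.2.2⟩
  have p1 := rn_apply hm a L hvm
  have p2 := rn_apply hm' a L hvm'
  simp only [Finsupp.add_apply]
  omega

lemma rn_negA (hq : ∀ n : ℕ, 0 < n → (q : ℂ) ^ n ≠ 1) (a : ℂˣ) :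
    RightNeg q (-(A q a)) := by
  have hq2 : a * q⁻¹ ≠ a * q := by
    intro h
    have h' : q⁻¹ = q := mul_left_cancel h
    have hv : (q : ℂ) * q = 1 := by
      have := q.inv_mul
      rw [h'] at this
      exact_mod_cast this
    exact hq 2 (by norm_num) (by rw [pow_two]; exact hv)
  have hqneg : (q : ℂ) ≠ -1 := by
    intro h
    exact hq 2 (by norm_num) (by rw [h]; norm_num)
  have hne1 : -a ≠ a * q := by
    intro h
    have h' : (-1 : ℂˣ) = q := mul_left_cancel (by rw [mul_neg_one]; exact h)
    apply hqneg
    rw [← h']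
    simp
  have hne2 : -a ≠ a * q⁻¹ := by
    intro h
    have h' : (-1 : ℂˣ) = q⁻¹ := mul_left_cancel (by rw [mul_neg_one]; exact h)
    apply hqneg
    have : q = (-1 : ℂˣ)⁻¹ := by rw [h', inv_inv]
    rw [this]
    simp
  have e1 : (-(A q a)) (a * q) = -1 := by
    simp [A, Z, Finsupp.single_apply, hq2, hne1]
  intro b L _ hmax
  by_cases h1 : b * q ^ L = a
  · exfalso
    have he : b * q ^ (L + 1) = a * q := by
      rw [zpow_add_one, ← mul_assoc, h1]
    have h0 := (hmax (L + 1) (by omega)).1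
    rw [he, e1] at h0
    exact absurd h0 (by norm_num)
  · by_cases h2 : b * q ^ L = -a
    · exfalso
      have he : -(b * q ^ (L + 1)) = a * q := by
        rw [zpow_add_one, ← mul_assoc, h2, neg_mul, neg_neg]
      have h0 := (hmax (L + 1) (by omega)).2
      rw [he, e1] at h0
      exact absurd h0 (by norm_num)
    · have h2' : -a ≠ b * q ^ L := fun h => h2 h.symm
      have h1' : -a ≠ -(b * q ^ L) := fun h => h1 (neg_injective h.symm)
      constructor
      · simp only [A, Z, Finsupp.neg_apply, Finsupp.sub_apply, Finsupp.add_apply,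
          Finsupp.single_apply, if_neg h2']
        split_ifs <;> omega
      · simp only [A, Z, Finsupp.neg_apply, Finsupp.sub_apply, Finsupp.add_apply,
          Finsupp.single_apply, if_neg h1']
        split_ifs <;> omega

lemma rn_sub_sum (hq : ∀ n : ℕ, 0 < n → (q : ℂ) ^ n ≠ 1) :
    ∀ m : Mon, RightNeg q m → ∀ (N : ℕ) (b : Fin N → ℂˣ),
      RightNeg q (m - ∑ l : Fin N, A q (b l)) := by
  intro m hm N
  induction N with
  | zero => intro b; simpa using hm
  | succ n ih =>
    intro b
    have heq : m - ∑ l : Fin (n + 1), A q (b l) =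
        (m - ∑ l : Fin n, A q (b l.castSucc)) + (-(A q (b (Fin.last n)))) := by
      rw [Fin.sum_univ_castSucc]
      abel
    rw [heq]
    exact rn_add hq (ih _) (rn_negA hq _)

lemma rn_not_dominant (hq : ∀ n : ℕ, 0 < n → (q : ℂ) ^ n ≠ 1) (m : Mon)
    (hm0 : m ≠ 0) (hm : RightNeg q m) : ¬ Dominant m := by
  intro hdom
  obtain ⟨c, hc⟩ : ∃ c, m c ≠ 0 := by
    by_contra h
    push_neg at h
    exact hm0 (Finsupp.ext h)
  have hT : {l : ℤ | m (c * q ^ l) ≠ 0 ∨ m (-(c * q ^ l)) ≠ 0}.Finite := finite_S hq m c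
  have h0T : (0 : ℤ) ∈ {l : ℤ | m (c * q ^ l) ≠ 0 ∨ m (-(c * q ^ l)) ≠ 0} := by
    left; simpa using hc
  have hFne : hT.toFinset.Nonempty := ⟨0, hT.mem_toFinset.2 h0T⟩
  set L := hT.toFinset.max' hFne with hLdef
  have hLT : m (c * q ^ L) ≠ 0 ∨ m (-(c * q ^ L)) ≠ 0 :=
    hT.mem_toFinset.1 (hT.toFinset.max'_mem hFne)
  have hvan : ∀ l : ℤ, L < l → m (c * q ^ l) = 0 ∧ m (-(c * q ^ l)) = 0 := by
    intro l hl
    by_contra h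
    have hmem : l ∈ {l : ℤ | m (c * q ^ l) ≠ 0 ∨ m (-(c * q ^ l)) ≠ 0} := by
      simp only [Set.mem_setOf_eq]; tauto
    have := hT.toFinset.le_max' l (hT.mem_toFinset.2 hmem)
    omega
  have hle := hm c L hLT hvan
  have d1 := hdom (c * q ^ L)
  have d2 := hdom (-(c * q ^ L))
  rcases hLT with h | h <;> omega

end Aux

/-- Properties of right-negative monomials for the twisted quantum loop algebra of
type `A₂⁽²⁾` : (1) each `A_a⁻¹` is right-negative; (2) a product of right-negative
monomials is right-negative; (3) if `m` is right-negative and `m' = m · ∏ A_{b_l}⁻¹`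
(i.e. `m' ≤ m`), then `m'` is right-negative; in particular a (nontrivial)
right-negative monomial is not dominant. -/
theorem right_negative_properties (q : ℂˣ) (hq : ∀ n : ℕ, 0 < n → (q : ℂ) ^ n ≠ 1) :
    (∀ a : ℂˣ, RightNeg q (-(A q a)))
    ∧ (∀ m m' : Mon, RightNeg q m → RightNeg q m' → RightNeg q (m + m'))
    ∧ (∀ m : Mon, RightNeg q m → ∀ (N : ℕ) (b : Fin N → ℂˣ),
        RightNeg q (m - ∑ l : Fin N, A q (b l)))
    ∧ (∀ m : Mon, m ≠ 0 → RightNeg q m → ¬ Dominant m) := by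
  exact ⟨rn_negA hq, fun m m' hm hm' => rn_add hq hm hm', rn_sub_sum hq,
    rn_not_dominant hq⟩
end
end
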